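/- arXiv:2204.01199 — 2 statements merged into one kernel-verified Lean document; each statement's English description precedes it below -/
import Mathlib

section
/- Let T be a contraction on a Hilbert space H (‖T‖ ≤ 1) with closure of the range of (T - I) equal to H, and suppose 1 is not an eigenvalue of T. Then the Cayley transform L = -i(T + I)(T - I)^{-1} is a dissipative operator, i.e. Im ⟨L u, u⟩ ≥ 0 for all u in its domain. -/
/-- If `T` is a contraction on a Hilbert space `H` with `closure (ran (T - I)) = H`
and `1` is not an eigenvalue of `T`, then the Cayley transform `L = -i(T+I)(T-I)⁻¹`, defined on
`ran (T - I)` by `L ((T-I)x) = -i(T+I)x`, is dissipative: `Im ⟨Lu, u⟩ ≥ 0` for all `u ∈ dom L`. -/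
theorem cayley_transform_dissipative {H : Type*} [NormedAddCommGroup H]
    [InnerProductSpace ℂ H] [CompleteSpace H]
    (T : H →L[ℂ] H) (hT : ‖T‖ ≤ 1)
    (hran : closure (Set.range fun x => T x - x) = (Set.univ : Set H))
    (hker : ∀ x : H, T x = x → x = 0) :
    ∀ x : H, 0 ≤ (inner ℂ ((T x - x : H)) ((-Complex.I) • (T x + x)) : ℂ).im := by
  intro x
  have hle : ‖T x‖ ≤ ‖x‖ := by
    calc ‖T x‖ ≤ ‖T‖ * ‖x‖ := T.le_opNorm x
    _ ≤ 1 * ‖x‖ := by gcongr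
    _ = ‖x‖ := one_mul _
  have hre : (inner ℂ (T x - x) (T x + x) : ℂ).re ≤ 0 := by
    have h1 : (inner ℂ (T x - x) (T x + x) : ℂ)
        = inner ℂ (T x) (T x) + inner ℂ (T x) x - inner ℂ x (T x) - inner ℂ x x := by
      rw [inner_sub_left, inner_add_right, inner_add_right]; ring
    have h2 : ((inner ℂ x (T x) : ℂ)).re = ((inner ℂ (T x) x : ℂ)).re := by
      rw [← inner_conj_symm (T x) x, Complex.conj_re]
    have h3 : ((inner ℂ (T x) (T x) : ℂ)).re = ‖T x‖ ^ 2 := by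
      rw [inner_self_eq_norm_sq_to_K]; norm_cast
    have h4 : ((inner ℂ x x : ℂ)).re = ‖x‖ ^ 2 := by
      rw [inner_self_eq_norm_sq_to_K]; norm_cast
    have : (inner ℂ (T x - x) (T x + x) : ℂ).re = ‖T x‖ ^ 2 - ‖x‖ ^ 2 := by
      rw [h1]; simp only [Complex.sub_re, Complex.add_re, h2, h3, h4]; ring
    rw [this]
    nlinarith [norm_nonneg (T x), norm_nonneg x]
  rw [inner_smul_right]
  simp only [Complex.mul_im, Complex.neg_re, Complex.neg_im, Complex.I_re, Complex.I_im]
  linarith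
end

section
/- In the setting of the boundary value problem {A₀, Π} above, let Λ be a self-adjoint operator on E and define Γ₁(A₀^{-1}f + Πφ) := Π*f + Λφ for f ∈ H, φ ∈ dom Λ. Then the Green formula ⟨Au, v⟩_H - ⟨u, Av⟩_H = ⟨Γ₁u, Γ₀v⟩_E - ⟨Γ₀u, Γ₁v⟩_E holds for all u, v ∈ 𝒟 := {A₀^{-1}f + Πφ : f ∈ H, φ ∈ dom Λ}. -/
/-- Green's formula for the abstract boundary value problem.  With `A₀` encoded
via its inverse `R`, `Π = P`, a self-adjoint operator `Λ = Lam` on `dom Λ = DL ⊆ E`, and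
`A u = f`, `Γ₀ u = φ`, `Γ₁ u = Π* f + Λ φ` for `u = R f + Π φ` with `φ ∈ dom Λ`:
`⟨Au, v⟩ - ⟨u, Av⟩ = ⟨Γ₁u, Γ₀v⟩ - ⟨Γ₀u, Γ₁v⟩` for all `u, v ∈ 𝒟`. -/
theorem abstract_BVP_green_formula
    {H E : Type*} [NormedAddCommGroup H] [InnerProductSpace ℂ H] [CompleteSpace H]
    [NormedAddCommGroup E] [InnerProductSpace ℂ E] [CompleteSpace E]
    (R : H →L[ℂ] H) (hRsa : IsSelfAdjoint R) (hRinj : Function.Injective R)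
    (P : E →L[ℂ] H) (Gt : H →L[ℂ] E) (hleft : ∀ φ : E, Gt (P φ) = φ)
    (htriv : ∀ (f : H) (φ : E), R f = P φ → R f = 0)
    (DL : Submodule ℂ E) (Lam : DL →ₗ[ℂ] E)
    (hLam : ∀ φ ψ : DL, (inner ℂ (Lam φ) ((ψ : E)) : ℂ) = inner ℂ ((φ : E)) (Lam ψ)) :
    ∀ (f g : H) (φ ψ : DL),
      letI u : H := R f + P (φ : E)
      letI v : H := R g + P (ψ : E)
      (inner ℂ f v : ℂ) - inner ℂ u g =
        (inner ℂ (P.adjoint f + Lam φ) ((ψ : E)) : ℂ) -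
          inner ℂ ((φ : E)) (P.adjoint g + Lam ψ) := by
  intro f g φ ψ
  have hR : (inner ℂ f (R g) : ℂ) = inner ℂ (R f) g := by
    conv_lhs => rw [← hRsa.adjoint_eq, ContinuousLinearMap.adjoint_inner_right]
  simp only [inner_add_left, inner_add_right, ContinuousLinearMap.adjoint_inner_left,
    ContinuousLinearMap.adjoint_inner_right, hR, hLam φ ψ]
  ring
end
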